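/- Let T be a directed tree. If there exists a family λ = {λ_v}_{v∈V°} of nonzero complex numbers such that the weighted shift S_λ has dense domain in ℓ²(V) and D(S_λ²) = {0}, then the set Chi(u) of children of u is countably infinite for every u ∈ V. -/

import Mathlib

open scoped ENNReal NNReal Classical

noncomputable section

/-- A directed tree: a directed graph with nonempty vertex set in which each vertex has
at most one parent, there are no circuits, and the underlying undirected graph is
connected and has no cycles (i.e. is a tree). -/
structure DirectedTree (V : Type) where
  edge : V → V → Prop
  nonempty : Nonempty V
  antisymm : ∀ u v : V, edge u v → ¬ edge v u
  parent_unique : ∀ u v w : V, edge u w → edge v w → u = v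
  isTree : (SimpleGraph.fromRel edge).IsTree

namespace DirectedTree

variable {V : Type} (T : DirectedTree V)

/-- The set of children of a vertex. -/
def chi (u : V) : Set V := {v | T.edge u v}

/-- `v` has a parent. -/
def HasParent (v : V) : Prop := ∃ u, T.edge u v

/-- `V⁰`: the set of non-root vertices, i.e. the vertices possessing a parent. -/
def Vcirc : Set V := {v | T.HasParent v}

/-- The tree is leafless if every vertex has a child. -/
def Leafless : Prop := ∀ u : V, (T.chi u).Nonempty

/-- The parent of a vertex (junk value if the vertex is a root). -/
def par (v : V) : V := if h : T.HasParent v then h.choose else T.nonempty.some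

/-- The set of descendants of a vertex. -/
def desc (u : V) : Set V := {w | Relation.ReflTransGen T.edge u w}

/-- The formal weighted shift map `Λ_T` acting on all complex functions on `V`. -/
def Lam (lam : V → ℂ) (f : V → ℂ) : V → ℂ :=
  fun v => if T.HasParent v then lam v * f (T.par v) else 0

/-- The domain of the weighted shift `S_λ`. -/
def domain (lam : V → ℂ) : Set (lp (fun _ : V => ℂ) 2) :=
  {f | Memℓp (T.Lam lam ⇑f) 2}

/-- The weighted shift `S_λ` (extended by `0` outside its domain). -/
def shift (lam : V → ℂ) (f : lp (fun _ : V => ℂ) 2) : lp (fun _ : V => ℂ) 2 :=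
  if h : f ∈ T.domain lam then (⟨T.Lam lam ⇑f, h⟩ : lp (fun _ : V => ℂ) 2) else 0

/-- The domain of `S_λ²`. -/
def squareDomain (lam : V → ℂ) : Set (lp (fun _ : V => ℂ) 2) :=
  {f | f ∈ T.domain lam ∧ T.shift lam f ∈ T.domain lam}

/-- The domain of the adjoint `S_λ*`. -/
def adjDomain (lam : V → ℂ) : Set (lp (fun _ : V => ℂ) 2) :=
  {g | ∃ h : lp (fun _ : V => ℂ) 2,
    ∀ f ∈ T.domain lam, (inner ℂ (T.shift lam f) g : ℂ) = inner ℂ f h}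

/-- `S_λ` is hyponormal: it is densely defined, `D(S_λ) ⊆ D(S_λ*)` and
`‖S_λ* f‖ ≤ ‖S_λ f‖` for every `f ∈ D(S_λ)` (the adjoint value at `f` being any vector
`h` satisfying `⟪S_λ g, f⟫ = ⟪g, h⟫` for all `g ∈ D(S_λ)`; it is unique by density). -/
def IsHyponormal (lam : V → ℂ) : Prop :=
  Dense (T.domain lam) ∧ T.domain lam ⊆ T.adjDomain lam ∧
    ∀ f ∈ T.domain lam, ∀ h : lp (fun _ : V => ℂ) 2,
      (∀ g ∈ T.domain lam, (inner ℂ (T.shift lam g) f : ℂ) = inner ℂ g h) →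
        ‖h‖ ≤ ‖T.shift lam f‖

/-- `ζ_u = (Σ_{v ∈ Chi(u)} |λ_v|²)^{1/2} ∈ [0,∞]`. -/
def zeta (lam : V → ℂ) (u : V) : ℝ≥0∞ :=
  (∑' v : T.chi u, ((‖lam (v : V)‖₊ : ℝ≥0∞)) ^ 2) ^ (1/2 : ℝ)

end DirectedTree

namespace DirectedTree

variable {V : Type} (T : DirectedTree V)

lemma edge_par' {v : V} (h : T.HasParent v) : T.edge (T.par v) v := by
  rw [DirectedTree.par, dif_pos h]; exact h.choose_spec

lemma par_eq' {u v : V} (e : T.edge u v) : T.par v = u :=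
  T.parent_unique _ _ _ (T.edge_par' ⟨u, e⟩) e

lemma lam_apply_of_edge' (lam : V → ℂ) (g : V → ℂ) {u v : V} (e : T.edge u v) :
    T.Lam lam g v = lam v * g u := by
  simp only [DirectedTree.Lam]
  rw [if_pos ⟨u, e⟩, T.par_eq' e]

lemma mem_domain_iff' {lam : V → ℂ} {f : lp (fun _ : V => ℂ) 2} :
    f ∈ T.domain lam ↔ Summable (fun v => ‖T.Lam lam ⇑f v‖ ^ 2) := by
  have h2 : ((2 : ℝ≥0∞)).toReal = ((2 : ℕ) : ℝ) := by norm_num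
  rw [DirectedTree.domain, Set.mem_setOf_eq, memℓp_gen_iff (by rw [h2]; norm_num)]
  simp_rw [h2, Real.rpow_natCast]

lemma summable_chi' (lam : V → ℂ) (hd : Dense (T.domain lam)) (u : V) :
    Summable (fun v : T.chi u => ‖lam (v : V)‖ ^ 2) := by
  classical
  obtain ⟨f, hf, hdist⟩ := hd.exists_dist_lt (lp.single 2 u 1) one_pos
  have hfu : (⇑f : V → ℂ) u ≠ 0 := by
    intro h0
    have h1 : ‖(f - lp.single 2 u 1 : lp (fun _ : V => ℂ) 2) u‖ ≤ ‖f - lp.single 2 u 1‖ :=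
      lp.norm_apply_le_norm two_ne_zero _ u
    have h2 : (f - lp.single 2 u 1 : lp (fun _ : V => ℂ) 2) u
        = (⇑f : V → ℂ) u - (lp.single 2 u 1 : lp (fun _ : V => ℂ) 2) u := by
      rw [lp.coeFn_sub]; rfl
    rw [h2, lp.single_apply_self, h0, zero_sub, norm_neg, norm_one] at h1
    have h3 : ‖f - lp.single 2 u 1‖ < 1 := by
      rw [← dist_eq_norm]
      rw [dist_comm]
      exact hdist
    linarith
  have hs := (T.mem_domain_iff'.mp hf).subtype (T.chi u)
  refine Summable.congr (hs.mul_right ((‖(⇑f : V → ℂ) u‖ ^ 2)⁻¹)) ?_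
  intro v
  have hv : T.edge u (v : V) := v.2
  show ‖T.Lam lam ⇑f (v : V)‖ ^ 2 * (‖(⇑f : V → ℂ) u‖ ^ 2)⁻¹ = ‖lam (v : V)‖ ^ 2
  rw [T.lam_apply_of_edge' lam ⇑f hv, norm_mul, mul_pow, mul_assoc,
    mul_inv_cancel₀ (pow_ne_zero 2 (norm_ne_zero_iff.mpr hfu)), mul_one]

end DirectedTree


/-- Theorem 3.1, (i) ⇒ (ii): if there is a family of nonzero weights making `S_λ`
densely defined with `D(S_λ²) = {0}`, then every vertex has countably infinitely
many children. -/
theorem stmt7 {V : Type} (T : DirectedTree V)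
    (h : ∃ lam : V → ℂ, (∀ v ∈ T.Vcirc, lam v ≠ 0) ∧ Dense (T.domain lam) ∧
      T.squareDomain lam = ({0} : Set (lp (fun _ : V => ℂ) 2))) :
    ∀ u : V, (T.chi u).Countable ∧ (T.chi u).Infinite := by
  classical
  obtain ⟨lam, hne, hd, hsq⟩ := h
  intro u
  have hsum := T.summable_chi' lam hd
  constructor
  · -- countability
    have hc := (hsum u).countable_support
    have hsupp : Function.support (fun v : T.chi u => ‖lam (v : V)‖ ^ 2) = Set.univ := by
      ext v
      simp only [Function.mem_support, Set.mem_univ, iff_true]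
      exact pow_ne_zero _ (norm_ne_zero_iff.mpr (hne (v : V) ⟨u, v.2⟩))
    rw [hsupp] at hc
    exact Set.countable_coe_iff.mp (Set.countable_univ_iff.mp hc)
  · -- infiniteness
    intro hfin
    set e : lp (fun _ : V => ℂ) 2 := lp.single 2 u 1 with he_def
    have heu : (⇑e : V → ℂ) u = (1 : ℂ) := lp.single_apply_self 2 u 1
    have hzero : ∀ v : V, v ∉ T.chi u → T.Lam lam ⇑e v = 0 := by
      intro v hv
      by_cases hp : T.HasParent v
      · have hpar : T.par v ≠ u := fun hh => hv (hh ▸ T.edge_par' hp)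
        simp only [DirectedTree.Lam]
        rw [if_pos hp]
        have : (⇑e : V → ℂ) (T.par v) = 0 := lp.single_apply_ne 2 u 1 hpar
        rw [this, mul_zero]
      · simp only [DirectedTree.Lam]
        rw [if_neg hp]
    have he_dom : e ∈ T.domain lam := by
      rw [T.mem_domain_iff']
      apply summable_of_ne_finset_zero (s := hfin.toFinset)
      intro v hv
      rw [hzero v (fun hm => hv (hfin.mem_toFinset.mpr hm))]
      simp
    set g : V → ℂ := T.Lam lam ⇑e with hg
    have hg_supp : ∀ w : V, g w ≠ 0 → w ∈ T.chi u := fun w hw =>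
      by_contra fun hnw => hw (hzero w hnw)
    have hshift : (⇑(T.shift lam e) : V → ℂ) = g := by
      rw [DirectedTree.shift, dif_pos he_dom]
    have hs_dom : T.shift lam e ∈ T.domain lam := by
      rw [T.mem_domain_iff', hshift]
      have heq : (fun v => ‖T.Lam lam g v‖ ^ 2) =
          fun v => ∑ w ∈ hfin.toFinset,
            Set.indicator (T.chi w) (fun v' => ‖T.Lam lam g v'‖ ^ 2) v := by
        funext v
        by_cases hv : ∃ w ∈ hfin.toFinset, v ∈ T.chi w
        · obtain ⟨w, hwF, hvw⟩ := hv
          rw [Finset.sum_eq_single_of_mem w hwF]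
          · rw [Set.indicator_of_mem hvw]
          · intro b hb hbw
            exact Set.indicator_of_notMem
              (fun hvb => hbw (T.parent_unique b w v hvb hvw)) _
        · push_neg at hv
          have h0 : T.Lam lam g v = 0 := by
            by_cases hp : T.HasParent v
            · simp only [DirectedTree.Lam]
              rw [if_pos hp]
              have hgp : g (T.par v) = 0 := by
                by_contra hne0
                exact hv (T.par v) (hfin.mem_toFinset.mpr (hg_supp _ hne0))
                  (T.edge_par' hp)
              rw [hgp, mul_zero]
            · simp only [DirectedTree.Lam]
              rw [if_neg hp]
          rw [h0]
          rw [Finset.sum_eq_zero fun w hw => Set.indicator_of_notMem (hv w hw) _]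
          simp
      rw [heq]
      apply summable_sum
      intro w hw
      rw [← summable_subtype_iff_indicator]
      refine Summable.congr ((hsum w).mul_right (‖g w‖ ^ 2)) ?_
      intro v
      show ‖lam (v : V)‖ ^ 2 * ‖g w‖ ^ 2 = ‖T.Lam lam g (v : V)‖ ^ 2
      rw [T.lam_apply_of_edge' lam g v.2, norm_mul, mul_pow]
    have hmem : e ∈ T.squareDomain lam := ⟨he_dom, hs_dom⟩
    rw [hsq] at hmem
    have h10 : (⇑e : V → ℂ) u = (⇑(0 : lp (fun _ : V => ℂ) 2) : V → ℂ) u := by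
      rw [hmem]
    rw [heu, lp.coeFn_zero] at h10
    exact one_ne_zero h10
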